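/- For integers 1 ≤ m ≤ k and n ≥ l ≥ k+1, the number op_{n,≥k,≤l}^m of ordered preference sets (a_1,…,a_n) of length n with at least k flaws, leading term a_1 = m, and a_i ≤ l for all i, equals C(n+l−m−1, l−k−2). -/

import Mathlib

/-- The first unoccupied parking space `j` with `p ≤ j ≤ n`, if any. -/
def firstFree (n : ℕ) (occ : Finset ℕ) (p : ℕ) : Option ℕ :=
  (List.range' p (n + 1 - p)).find? (fun j => decide (j ∉ occ))

/-- Number of cars that fail to park, processing the preference list in order,
given the set of already occupied spaces. -/
def flawsFrom (n : ℕ) : List ℕ → Finset ℕ → ℕ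
  | [], _ => 0
  | p :: rest, occ =>
    match firstFree n occ p with
    | none => flawsFrom n rest occ + 1
    | some j => flawsFrom n rest (insert j occ)

/-- The number of flaws (unparked cars) of a preference list of length `n`. -/
def flaws (n : ℕ) (a : List ℕ) : ℕ := flawsFrom n a ∅

/-- A preference set of length `n`: a list of length `n` with entries in `{1, …, n}`. -/
def IsPrefSet (n : ℕ) (a : List ℕ) : Prop :=
  a.length = n ∧ ∀ x ∈ a, 1 ≤ x ∧ x ≤ n

/-- An ordered preference set of length `n`: a nondecreasing preference set. -/
def IsOrderedPrefSet (n : ℕ) (a : List ℕ) : Prop :=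
  IsPrefSet n a ∧ a.Pairwise (· ≤ ·)

/-- `op_{n,≥k}`: number of ordered preference sets of length `n` with at least `k` flaws. -/
noncomputable def opGe (n k : ℕ) : ℕ :=
  {a : List ℕ | IsOrderedPrefSet n a ∧ k ≤ flaws n a}.ncard

/-- `op_{n,≤k}`: number of ordered preference sets of length `n` with at most `k` flaws. -/
noncomputable def opLe (n k : ℕ) : ℕ :=
  {a : List ℕ | IsOrderedPrefSet n a ∧ flaws n a ≤ k}.ncard

/-- `op_{n,k}`: number of ordered preference sets of length `n` with exactly `k` flaws. -/
noncomputable def opEq (n k : ℕ) : ℕ :=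
  {a : List ℕ | IsOrderedPrefSet n a ∧ flaws n a = k}.ncard

/-- `op_{n,≥k,≤l}`: at least `k` flaws, every entry at most `l`. -/
noncomputable def opGeLe (n k l : ℕ) : ℕ :=
  {a : List ℕ | IsOrderedPrefSet n a ∧ k ≤ flaws n a ∧ ∀ x ∈ a, x ≤ l}.ncard

/-- `op_{n,≥k,≤l}^m`: at least `k` flaws, every entry at most `l`, leading term `m`. -/
noncomputable def opGeLeLead (n k l m : ℕ) : ℕ :=
  {a : List ℕ | IsOrderedPrefSet n a ∧ k ≤ flaws n a ∧ (∀ x ∈ a, x ≤ l) ∧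
    a.head? = some m}.ncard

/-- `op_{n,k,≤l}^m`: exactly `k` flaws, every entry at most `l`, leading term `m`. -/
noncomputable def opEqLeLead (n k l m : ℕ) : ℕ :=
  {a : List ℕ | IsOrderedPrefSet n a ∧ flaws n a = k ∧ (∀ x ∈ a, x ≤ l) ∧
    a.head? = some m}.ncard

/-- `op_{n,k}^m`: exactly `k` flaws, leading term `m`. -/
noncomputable def opLead (n k m : ℕ) : ℕ :=
  {a : List ℕ | IsOrderedPrefSet n a ∧ flaws n a = k ∧ a.head? = some m}.ncard

/-- `op_{n,k,=l}^m`: exactly `k` flaws, maximal entry exactly `l`, leading term `m`. -/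
noncomputable def opMaxLead (n k l m : ℕ) : ℕ :=
  {a : List ℕ | IsOrderedPrefSet n a ∧ flaws n a = k ∧ (∀ x ∈ a, x ≤ l) ∧ l ∈ a ∧
    a.head? = some m}.ncard

/-- Binomial coefficient `C(a, b)` with an integer lower index, which is `0`
when `b < 0` (the standard convention). -/
def chooseInt (a : ℕ) (b : ℤ) : ℕ := if 0 ≤ b then a.choose b.toNat else 0

def runSim (n : ℕ) : List ℕ → ℕ → ℕ
  | [], _ => 0
  | p :: rest, s => if max p (s+1) ≤ n then runSim n rest (max p (s+1)) else rest.length + 1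

lemma firstFree_eq_none {n : ℕ} {occ : Finset ℕ} {p : ℕ}
    (h : ∀ j, p ≤ j → j ≤ n → j ∈ occ) : firstFree n occ p = none := by
  unfold firstFree
  apply List.find?_eq_none.mpr
  intro j hj
  rw [List.mem_range'_1] at hj
  have hjn : j ≤ n := by omega
  simpa using h j hj.1 hjn

lemma firstFree_eq_some {n : ℕ} {occ : Finset ℕ} {p v : ℕ} (hpv : p ≤ v) (hvn : v ≤ n)
    (hv : v ∉ occ) (hbelow : ∀ t, p ≤ t → t < v → t ∈ occ) :
    firstFree n occ p = some v := by
  unfold firstFree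
  have h1 : n + 1 - p = (n + 1 - v) + (v - p) := by omega
  rw [h1, Nat.add_comm (n + 1 - v) (v - p), ← List.range'_append (s := p) (m := v - p) (n := n + 1 - v) (step := 1)]
  have h2 : p + 1 * (v - p) = v := by omega
  rw [h2, List.find?_append]
  have h3 : List.find? (fun j => decide (j ∉ occ)) (List.range' p (v - p)) = none := by
    apply List.find?_eq_none.mpr
    intro j hj
    rw [List.mem_range'_1] at hj
    simpa using hbelow j hj.1 (by omega)
  have h4 : n + 1 - v = (n - v) + 1 := by omega
  rw [h3, h4, List.range'_succ, List.find?_cons_of_pos (by simpa using hv)]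
  rfl

lemma flawsFrom_eq_length (n : ℕ) : ∀ (a : List ℕ) (occ : Finset ℕ),
    (∀ p ∈ a, firstFree n occ p = none) → flawsFrom n a occ = a.length := by
  intro a
  induction a with
  | nil => intro occ _; rfl
  | cons p rest ih =>
    intro occ h
    rw [flawsFrom, h p (by simp)]
    simp [ih occ fun q hq => h q (by simp [hq])]

lemma flawsFrom_eq_runSim (n : ℕ) : ∀ (a : List ℕ) (q s : ℕ) (occ : Finset ℕ),
    a.Pairwise (· ≤ ·) → (∀ x ∈ a, q ≤ x ∧ x ≤ n) →
    (∀ t, q ≤ t → t ≤ s → t ∈ occ) → (∀ t ∈ occ, t ≤ s) → s ≤ n →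
    flawsFrom n a occ = runSim n a s := by
  intro a
  induction a with
  | nil => intros; rfl
  | cons p rest ih =>
    intro q s occ hsort hx hocc1 hocc2 hsn
    obtain ⟨hqp, hpn⟩ := hx p (by simp)
    obtain ⟨hrestle, hrestsort⟩ := List.pairwise_cons.mp hsort
    by_cases hcase : max p (s+1) ≤ n
    · set v := max p (s+1) with hv
      have hff : firstFree n occ p = some v := by
        apply firstFree_eq_some (le_max_left _ _) hcase
        · intro hmem
          have := hocc2 _ hmem
          omega
        · intro t hpt htv
          have hts : t ≤ s := by omega
          exact hocc1 t (hqp.trans hpt) hts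
      rw [flawsFrom, hff, runSim, if_pos hcase]
      apply ih p v (insert v occ) hrestsort
      · intro x hx'
        exact ⟨hrestle x hx', (hx x (by simp [hx'])).2⟩
      · intro t hpt htv
        rcases eq_or_lt_of_le htv with h | h
        · simp [h]
        · have hts : t ≤ s := by omega
          exact Finset.mem_insert_of_mem (hocc1 t (hqp.trans hpt) hts)
      · intro t ht
        rcases Finset.mem_insert.mp ht with h | h
        · omega
        · have := hocc2 t h; omega
      · exact hcase
    · have hsn' : s = n := by omega
      have hnone : ∀ x, q ≤ x → firstFree n occ x = none := by
        intro x hqx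
        exact firstFree_eq_none fun j hxj hjn => hocc1 j (hqx.trans hxj) (by omega)
      rw [flawsFrom, hnone p hqp]
      rw [flawsFrom_eq_length n rest occ fun x hx' => hnone x (hqp.trans (hrestle x hx'))]
      rw [runSim, if_neg hcase]

lemma flaws_eq_runSim {n : ℕ} {a : List ℕ} (hs : a.Pairwise (· ≤ ·))
    (hx : ∀ x ∈ a, 1 ≤ x ∧ x ≤ n) : flaws n a = runSim n a 0 := by
  apply flawsFrom_eq_runSim n a 1 0 ∅ hs hx
  · intro t h1 h0; omega
  · intro t ht; simp at ht
  · exact Nat.zero_le n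

lemma runSim_lower (n : ℕ) : ∀ (a : List ℕ) (s i d : ℕ), i + d < a.length →
    (n + 1 ≤ a.getD i 0 + d ∨ n + 1 ≤ s + i + d + 1) →
    a.length - (i + d) ≤ runSim n a s := by
  intro a
  induction a with
  | nil => intro s i d h; simp at h
  | cons p rest ih =>
    intro s i d hlt hyp
    rw [runSim]
    by_cases hc : max p (s+1) ≤ n
    · rw [if_pos hc]
      have hp : p ≤ n := le_trans (le_max_left _ _) hc
      have hs1 : s + 1 ≤ n := le_trans (le_max_right _ _) hc
      have hsp : p ≤ max p (s+1) := le_max_left _ _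
      have hss : s + 1 ≤ max p (s+1) := le_max_right _ _
      match i, d with
      | 0, 0 =>
        simp only [List.getD_cons_zero] at hyp
        omega
      | 0, d + 1 =>
        simp only [List.getD_cons_zero] at hyp
        simp only [List.length_cons] at hlt
        have := ih (max p (s+1)) 0 d (by omega) (Or.inr (by omega))
        simp only [List.length_cons]
        omega
      | i + 1, d =>
        simp only [List.getD_cons_succ] at hyp
        simp only [List.length_cons] at hlt
        have := ih (max p (s+1)) i d (by omega)
          (hyp.imp (fun h => h) (fun h => by omega))
        simp only [List.length_cons]
        omega
    · rw [if_neg hc]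
      simp only [List.length_cons]
      omega

lemma runSim_upper (n : ℕ) : ∀ (a : List ℕ) (s t : ℕ),
    (∀ i, i < a.length → a.getD i 0 ≤ i + 1 + t) → s ≤ t →
    runSim n a s ≤ a.length + t - n := by
  intro a
  induction a with
  | nil => intro s t _ _; simp [runSim]
  | cons p rest ih =>
    intro s t hbound hst
    have hp : p ≤ 1 + t := by simpa using hbound 0 (by simp)
    rw [runSim]
    by_cases hc : max p (s+1) ≤ n
    · rw [if_pos hc]
      have := ih (max p (s+1)) (t+1)
        (fun i hi => by
          have := hbound (i+1) (by simpa using Nat.succ_lt_succ hi)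
          simp only [List.getD_cons_succ] at this
          omega)
        (by omega)
      simp only [List.length_cons]
      omega
    · rw [if_neg hc]
      have : n + 1 ≤ max p (s+1) := by omega
      have hmax : max p (s+1) ≤ t + 1 := by omega
      simp only [List.length_cons]
      omega

lemma flaws_ge_iff {n k : ℕ} (hk : 1 ≤ k) {a : List ℕ} (hs : a.Pairwise (· ≤ ·))
    (hlen : a.length = n) (hent : ∀ x ∈ a, 1 ≤ x ∧ x ≤ n) :
    k ≤ flaws n a ↔ ∃ i < n, i + 1 + k ≤ a.getD i 0 := by
  rw [flaws_eq_runSim hs hent]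
  constructor
  · intro h
    by_contra hcon
    push_neg at hcon
    have := runSim_upper n a 0 (k-1) (fun i hi => by
      have := hcon i (by omega)
      omega) (by omega)
    omega
  · rintro ⟨i, hin, hi⟩
    have hain : a.getD i 0 ≤ n := by
      have hmem : a.getD i 0 ∈ a := by
        rw [List.getD_eq_getElem a 0 (by omega)]
        exact List.getElem_mem _
      exact (hent _ hmem).2
    have hik : i + k ≤ n := by omega
    have := runSim_lower n a 0 i (n - k - i) (by omega) (Or.inl (by omega))
    omega

lemma chooseInt_succ (a : ℕ) (b : ℤ) :
    chooseInt (a+1) b = chooseInt a (b - 1) + chooseInt a b := by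
  unfold chooseInt
  rcases lt_trichotomy b 0 with h | h | h
  · rw [if_neg (by omega), if_neg (by omega), if_neg (by omega)]
  · subst h
    rw [if_pos le_rfl, if_neg (by omega), if_pos le_rfl]
    simp
  · rw [if_pos (by omega), if_pos (by omega), if_pos (by omega)]
    have h1 : b.toNat = (b-1).toNat + 1 := by omega
    rw [h1, Nat.choose_succ_succ]

def totSet (N m l : ℕ) : Set (List ℕ) :=
  {t | t.Pairwise (· ≤ ·) ∧ t.length = N ∧ ∀ x ∈ t, m ≤ x ∧ x ≤ l}

def gSet (N m l c : ℕ) : Set (List ℕ) :=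
  {t | t.Pairwise (· ≤ ·) ∧ t.length = N ∧ (∀ x ∈ t, m ≤ x ∧ x ≤ l) ∧
    ∃ j < N, j + c ≤ t.getD j 0}

lemma finite_boundedLists : ∀ (N l : ℕ), {t : List ℕ | t.length = N ∧ ∀ x ∈ t, x ≤ l}.Finite := by
  intro N
  induction N with
  | zero =>
    intro l
    apply Set.Finite.subset (Set.finite_singleton ([] : List ℕ))
    intro t ht
    simpa using List.length_eq_zero_iff.mp ht.1
  | succ N ih =>
    intro l
    apply Set.Finite.subset (Set.Finite.image (fun p : ℕ × List ℕ => p.1 :: p.2)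
      (Set.Finite.prod (Set.finite_Iic l) (ih l)))
    rintro t ⟨hlen, hall⟩
    cases t with
    | nil => simp at hlen
    | cons x r =>
      exact ⟨(x, r), ⟨hall x (by simp), by simpa using hlen,
        fun y hy => hall y (by simp [hy])⟩, rfl⟩

lemma totSet_finite (N m l : ℕ) : (totSet N m l).Finite :=
  Set.Finite.subset (finite_boundedLists N l)
    (fun t ht => ⟨ht.2.1, fun x hx => (ht.2.2 x hx).2⟩)

lemma gSet_finite (N m l c : ℕ) : (gSet N m l c).Finite :=
  Set.Finite.subset (finite_boundedLists N l)
    (fun t ht => ⟨ht.2.1, fun x hx => (ht.2.2.1 x hx).2⟩)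

lemma totSet_zero (m l : ℕ) : totSet 0 m l = {([] : List ℕ)} := by
  ext t
  simp only [totSet, Set.mem_setOf_eq, Set.mem_singleton_iff]
  constructor
  · rintro ⟨_, hlen, _⟩; exact List.length_eq_zero_iff.mp hlen
  · rintro rfl; simp

lemma sorted_replicate (N m : ℕ) : (List.replicate N m).Pairwise (· ≤ ·) := by
  induction N with
  | zero => simp
  | succ N ih =>
    rw [List.replicate_succ]
    exact List.pairwise_cons.mpr ⟨fun y hy => le_of_eq (List.eq_of_mem_replicate hy).symm, ih⟩

lemma totSet_const (N m : ℕ) : totSet N m m = {List.replicate N m} := by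
  ext t
  simp only [totSet, Set.mem_setOf_eq, Set.mem_singleton_iff]
  constructor
  · rintro ⟨_, hlen, hall⟩
    exact List.eq_replicate_iff.mpr ⟨hlen, fun x hx => le_antisymm (hall x hx).2 (hall x hx).1⟩
  · rintro rfl
    exact ⟨sorted_replicate N m, by simp, fun x hx => by simp [List.eq_of_mem_replicate hx]⟩

lemma totSet_split (N m l : ℕ) (hml : m < l) :
    totSet (N+1) m l = (List.cons m '' totSet N m l) ∪ totSet (N+1) (m+1) l := by
  ext t
  constructor
  · rintro ⟨hsort, hlen, hall⟩
    cases t with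
    | nil => simp at hlen
    | cons x r =>
      obtain ⟨hle, hrsort⟩ := List.pairwise_cons.mp hsort
      rcases eq_or_lt_of_le (hall x (by simp)).1 with h | h
      · left
        exact ⟨r, ⟨hrsort, by simpa using hlen, fun y hy => hall y (by simp [hy])⟩, by rw [h]⟩
      · right
        refine ⟨hsort, hlen, fun y hy => ⟨?_, (hall y hy).2⟩⟩
        rcases List.mem_cons.mp hy with rfl | hy'
        · omega
        · have := hle y hy'; omega
  · rintro (⟨r, ⟨hrsort, hrlen, hrall⟩, rfl⟩ | ⟨hsort, hlen, hall⟩)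
    · exact ⟨List.pairwise_cons.mpr ⟨fun y hy => (hrall y hy).1, hrsort⟩, by simp [hrlen],
        fun y hy => by
          rcases List.mem_cons.mp hy with rfl | hy'
          · exact ⟨le_rfl, by omega⟩
          · exact ⟨(hrall y hy').1, (hrall y hy').2⟩⟩
    · exact ⟨hsort, hlen, fun y hy => ⟨by have := (hall y hy).1; omega, (hall y hy).2⟩⟩

lemma cons_disj (N m l : ℕ) (S : Set (List ℕ)) :
    Disjoint (List.cons m '' S) (totSet (N+1) (m+1) l) := by
  rw [Set.disjoint_left]
  rintro t ⟨r, _, rfl⟩ ⟨_, _, hall⟩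
  have := (hall m (by simp)).1
  omega

lemma totSet_ncard : ∀ (M N m l : ℕ), N + (l - m) ≤ M → m ≤ l →
    (totSet N m l).ncard = (N + (l - m)).choose N := by
  intro M
  induction M with
  | zero =>
    intro N m l hM hml
    have hN : N = 0 := by omega
    subst hN
    rw [totSet_zero, Set.ncard_singleton, Nat.choose_zero_right]
  | succ M ih =>
    intro N m l hM hml
    match N with
    | 0 => rw [totSet_zero, Set.ncard_singleton, Nat.choose_zero_right]
    | N+1 =>
      rcases eq_or_lt_of_le hml with rfl | hml'
      · rw [totSet_const, Set.ncard_singleton]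
        simp [Nat.choose_self]
      · rw [totSet_split N m l hml',
          Set.ncard_union_eq (cons_disj N m l _) ((totSet_finite N m l).image _)
            (totSet_finite (N+1) (m+1) l),
          Set.ncard_image_of_injective _ (List.cons_injective),
          ih N m l (by omega) hml, ih (N+1) (m+1) l (by omega) hml']
        have h1 : N + 1 + (l - m) = (N + (l - m)) + 1 := by omega
        have h2 : N + 1 + (l - (m+1)) = N + (l - m) := by omega
        rw [h1, h2, Nat.choose_succ_succ]
lemma gSet_zero (m l c : ℕ) : gSet 0 m l c = ∅ := by
  ext t
  simp only [gSet, Set.mem_setOf_eq, Set.mem_empty_iff_false, iff_false, not_and]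
  rintro _ _ _ ⟨j, hj, _⟩
  omega

lemma gSet_eq_tot (N m l c : ℕ) (hmc : c ≤ m) : gSet (N+1) m l c = totSet (N+1) m l := by
  ext t
  simp only [gSet, totSet, Set.mem_setOf_eq]
  constructor
  · rintro ⟨h1, h2, h3, _⟩; exact ⟨h1, h2, h3⟩
  · rintro ⟨h1, h2, h3⟩
    refine ⟨h1, h2, h3, 0, by omega, ?_⟩
    cases t with
    | nil => simp at h2
    | cons x r =>
      have := (h3 x (by simp)).1
      simpa using by omega

lemma gSet_const (N m l c : ℕ) (hmc : m < c) (hml : m = l) : gSet N m l c = ∅ := by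
  ext t
  simp only [gSet, Set.mem_setOf_eq, Set.mem_empty_iff_false, iff_false, not_and]
  rintro _ hlen hall ⟨j, hj, hge⟩
  have hmem : t.getD j 0 ∈ t := by
    rw [List.getD_eq_getElem t 0 (by omega)]
    exact List.getElem_mem _
  have := (hall _ hmem).2
  omega

lemma gSet_split (N m l c : ℕ) (hmc : m < c) (hml : m < l) :
    gSet (N+1) m l c = (List.cons m '' gSet N m l (c+1)) ∪ gSet (N+1) (m+1) l c := by
  ext t
  constructor
  · rintro ⟨hsort, hlen, hall, j, hj, hge⟩
    cases t with
    | nil => simp at hlen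
    | cons x r =>
      obtain ⟨hle, hrsort⟩ := List.pairwise_cons.mp hsort
      rcases eq_or_lt_of_le (hall x (by simp)).1 with h | h
      · left
        refine ⟨r, ⟨hrsort, by simpa using hlen, fun y hy => hall y (by simp [hy]), ?_⟩, by rw [h]⟩
        match j with
        | 0 =>
          simp only [List.getD_cons_zero] at hge
          omega
        | j + 1 =>
          simp only [List.getD_cons_succ] at hge
          exact ⟨j, by omega, by omega⟩
      · right
        refine ⟨hsort, hlen, fun y hy => ⟨?_, (hall y hy).2⟩, j, hj, hge⟩
        rcases List.mem_cons.mp hy with rfl | hy'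
        · omega
        · have := hle y hy'; omega
  · rintro (⟨r, ⟨hrsort, hrlen, hrall, j, hj, hge⟩, rfl⟩ | ⟨hsort, hlen, hall, hex⟩)
    · refine ⟨List.pairwise_cons.mpr ⟨fun y hy => (hrall y hy).1, hrsort⟩, by simp [hrlen],
        fun y hy => ?_, j + 1, by omega, by simp only [List.getD_cons_succ]; omega⟩
      rcases List.mem_cons.mp hy with rfl | hy'
      · exact ⟨le_rfl, by omega⟩
      · exact hrall y hy'
    · exact ⟨hsort, hlen, fun y hy => ⟨by have := (hall y hy).1; omega, (hall y hy).2⟩, hex⟩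

lemma gSet_cons_disj (N m l c c' : ℕ) :
    Disjoint (List.cons m '' gSet N m l c') (gSet (N+1) (m+1) l c) := by
  rw [Set.disjoint_left]
  rintro t ⟨r, _, rfl⟩ ⟨_, _, hall, _⟩
  have := (hall m (by simp)).1
  omega

lemma gSet_ncard : ∀ (M N m l c : ℕ), N + (l - m) ≤ M → m ≤ c → m ≤ l → l + 1 ≤ N + c →
    (gSet N m l c).ncard = chooseInt (N + (l - m)) ((l : ℤ) - c) := by
  intro M
  induction M with
  | zero =>
    intro N m l c hM hmc hml hlc
    have hN : N = 0 := by omega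
    have hlm : l = m := by omega
    subst hN
    rw [gSet_zero, Set.ncard_empty, chooseInt, if_neg (by omega)]
  | succ M ih =>
    intro N m l c hM hmc hml hlc
    match N with
    | 0 => rw [gSet_zero, Set.ncard_empty, chooseInt, if_neg (by omega)]
    | N + 1 =>
      rcases eq_or_lt_of_le hmc with rfl | hmc'
      · -- m = c : gSet = totSet
        rw [gSet_eq_tot N m l m le_rfl, totSet_ncard (N + 1 + (l - m)) (N+1) m l le_rfl hml]
        rw [chooseInt, if_pos (by omega)]
        have h1 : ((l : ℤ) - m).toNat = l - m := by omega
        rw [h1]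
        have h2 : N + 1 + (l - m) - (N + 1) = l - m := by omega
        have h4 := Nat.choose_symm (n := N + 1 + (l - m)) (k := N + 1) (by omega)
        rw [h2] at h4
        exact h4.symm
      · rcases eq_or_lt_of_le hml with rfl | hml'
        · rw [gSet_const (N+1) m m c hmc' rfl, Set.ncard_empty, chooseInt, if_neg (by omega)]
        · rw [gSet_split N m l c hmc' hml',
            Set.ncard_union_eq (gSet_cons_disj N m l c (c+1))
              ((gSet_finite N m l (c+1)).image _) (gSet_finite (N+1) (m+1) l c),
            Set.ncard_image_of_injective _ (List.cons_injective),
            ih N m l (c+1) (by omega) (by omega) hml (by omega),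
            ih (N+1) (m+1) l c (by omega) (by omega) (by omega) (by omega)]
          have h1 : N + 1 + (l - m) = (N + (l - m)) + 1 := by omega
          have h2 : N + 1 + (l - (m+1)) = N + (l - m) := by omega
          have h3 : ((l : ℤ) - ((c : ℕ) + 1 : ℕ)) = ((l : ℤ) - c) - 1 := by push_cast; ring
          rw [h1, h2, h3, chooseInt_succ]

theorem stmt7 (n k l m : ℕ) (hm : 1 ≤ m) (hmk : m ≤ k) (hl : k + 1 ≤ l) (hn : l ≤ n) :
    opGeLeLead n k l m = chooseInt (n + l - m - 1) ((l : ℤ) - k - 2) := by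
  have hn1 : 1 ≤ n := by omega
  have hk1 : 1 ≤ k := by omega
  have key : {a : List ℕ | IsOrderedPrefSet n a ∧ k ≤ flaws n a ∧ (∀ x ∈ a, x ≤ l) ∧
      a.head? = some m} = List.cons m '' gSet (n-1) m l (k+2) := by
    ext a
    simp only [Set.mem_setOf_eq, Set.mem_image]
    constructor
    · rintro ⟨⟨⟨hlen, hent⟩, hsort⟩, hfl, hle, hhead⟩
      cases a with
      | nil => simp at hhead
      | cons x t =>
        obtain rfl : x = m := by simpa using hhead
        obtain ⟨hmle, htsort⟩ := List.pairwise_cons.mp hsort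
        obtain ⟨i, hin, hi⟩ := (flaws_ge_iff hk1 hsort hlen hent).mp hfl
        simp only [List.length_cons] at hlen
        refine ⟨t, ⟨htsort, by omega, fun y hy => ⟨hmle y hy, hle y (by simp [hy])⟩, ?_⟩, rfl⟩
        match i with
        | 0 =>
          simp only [List.getD_cons_zero] at hi
          omega
        | i + 1 =>
          simp only [List.getD_cons_succ] at hi
          exact ⟨i, by omega, by omega⟩
    · rintro ⟨t, ⟨hts, htl, hte, j, hj, hge⟩, rfl⟩
      have hsort : (m :: t).Pairwise (· ≤ ·) :=
        List.pairwise_cons.mpr ⟨fun y hy => (hte y hy).1, hts⟩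
      have hlen : (m :: t).length = n := by simp [htl]; omega
      have hent : ∀ x ∈ (m :: t), 1 ≤ x ∧ x ≤ n := by
        intro y hy
        rcases List.mem_cons.mp hy with rfl | hy'
        · omega
        · have := hte y hy'
          omega
      refine ⟨⟨⟨hlen, hent⟩, hsort⟩, ?_, ?_, rfl⟩
      · refine (flaws_ge_iff hk1 hsort hlen hent).mpr ⟨j + 1, by omega, ?_⟩
        simp only [List.getD_cons_succ]
        omega
      · intro y hy
        rcases List.mem_cons.mp hy with rfl | hy'
        · omega
        · exact (hte y hy').2
  rw [opGeLeLead, key, Set.ncard_image_of_injective _ (List.cons_injective),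
    gSet_ncard ((n-1) + (l - m)) (n-1) m l (k+2) le_rfl (by omega) (by omega) (by omega)]
  have h1 : (n-1) + (l - m) = n + l - m - 1 := by omega
  have h2 : ((l : ℤ) - ((k + 2 : ℕ) : ℤ)) = (l : ℤ) - k - 2 := by push_cast; ring
  rw [h1, h2]
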